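/- arXiv:1802.04988 — 2 statements merged into one kernel-verified Lean document; each statement's English description precedes it below -/
import Mathlib

section
/- For a sequence f of polynomial growth with Poisson transform P(z) = e^{-z}∑_{k} f(k) z^k/k!, the identity f(n) = ∑_{j≥0} (P^{(j)}(n)/j!) τ_j(n) holds, where τ_j(n) = n![z^n]((z-n)^j e^z) and P^{(j)} denotes the j-th derivative; the series converges. -/
open scoped Nat
open Filter Topology Set

private lemma entire_deriv {g : ℂ → ℂ} (h : Differentiable ℂ g) :
    Differentiable ℂ (deriv g) :=
  Complex.analyticOnNhd_univ_iff_differentiable.mp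
    ((Complex.analyticOnNhd_univ_iff_differentiable.mpr h).deriv)

private lemma entire_iteratedDeriv {g : ℂ → ℂ} (h : Differentiable ℂ g) (k : ℕ) :
    Differentiable ℂ (iteratedDeriv k g) := by
  induction k with
  | zero => simpa using h
  | succ k ih => rw [iteratedDeriv_succ]; exact entire_deriv ih

private lemma tlu_iteratedDeriv {ι : Type} {l : Filter ι} {F : ι → ℂ → ℂ} {G : ℂ → ℂ}
    (hF : ∀ i, Differentiable ℂ (F i)) (h : TendstoLocallyUniformlyOn F G l Set.univ) (k : ℕ) :
    TendstoLocallyUniformlyOn (fun i => iteratedDeriv k (F i)) (iteratedDeriv k G) l Set.univ := by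
  induction k with
  | zero => simpa [iteratedDeriv_zero] using h
  | succ k ih =>
    have h2 := ih.deriv (Eventually.of_forall fun i =>
      (entire_iteratedDeriv (hF i) k).differentiableOn) isOpen_univ
    simpa [iteratedDeriv_succ, Function.comp_def] using h2

private lemma iteratedDeriv_finset_sum {s : Finset ℕ} {h : ℕ → ℂ → ℂ}
    (hh : ∀ j, Differentiable ℂ (h j)) (m : ℕ) (x : ℂ) :
    iteratedDeriv m (fun z => ∑ j ∈ s, h j z) x = ∑ j ∈ s, iteratedDeriv m (h j) x := by
  simp only [iteratedDeriv_eq_iteratedFDeriv]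
  rw [iteratedFDeriv_sum (fun j _ => (hh j).contDiff)]
  simp

private lemma iteratedDeriv_cmul {g : ℂ → ℂ} (hg : Differentiable ℂ g) (c : ℂ) (m : ℕ) (x : ℂ) :
    iteratedDeriv m (fun z => c * g z) x = c * iteratedDeriv m g x := by
  simp only [iteratedDeriv_eq_iteratedFDeriv]
  have := iteratedFDeriv_const_smul_apply' (a := c) (f := g) (x := x)
    (hf := (hg.contDiff (n := m)).contDiffAt)
  simp only [smul_eq_mul] at this
  rw [this]
  simp

private lemma iteratedDeriv_monomial (k m : ℕ) :
    iteratedDeriv m (fun z : ℂ => z ^ k) = fun z => (k.descFactorial m : ℂ) * z ^ (k - m) := by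
  induction m with
  | zero => simp
  | succ m ih =>
    rw [iteratedDeriv_succ, ih]
    funext z
    rw [deriv_const_mul _ ((differentiable_pow _).differentiableAt), deriv_pow_field,
      Nat.descFactorial_succ, Nat.cast_mul, Nat.sub_sub]
    ring

private lemma iteratedDeriv_monomial_zero (k m : ℕ) :
    iteratedDeriv m (fun z : ℂ => z ^ k) 0 = if k = m then (m ! : ℂ) else 0 := by
  rw [iteratedDeriv_monomial]
  rcases lt_trichotomy k m with h | h | h
  · simp [Nat.descFactorial_eq_zero_iff_lt.mpr h, Nat.ne_of_lt h]
  · subst h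
    simp [Nat.descFactorial_self]
  · simp [zero_pow (Nat.sub_ne_zero_of_lt h), (Nat.ne_of_lt h).symm]

private lemma summable_aux {C r : ℝ} {g : ℕ → ℝ} (hg : ∀ k, |g k| ≤ C * ((k : ℝ) + 1) ^ r)
    {ρ : ℝ} (hρ : 0 ≤ ρ) :
    Summable (fun k : ℕ => |g k| * ρ ^ k / k !) := by
  set m := ⌈r⌉₊ with hm
  have hA : Summable (fun k : ℕ => ((k : ℝ) + 1) ^ m * (1 / 2 : ℝ) ^ k) := by
    have h0 : Summable (fun k : ℕ => ((k : ℝ)) ^ m * (1 / 2 : ℝ) ^ k) :=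
      summable_pow_mul_geometric_of_norm_lt_one m
        (by rw [Real.norm_eq_abs, abs_of_pos] <;> norm_num)
    have h1 := ((summable_nat_add_iff 1).mpr h0).mul_left 2
    refine h1.congr fun k => ?_
    push_cast
    ring
  have hev : ∀ᶠ k : ℕ in atTop, ρ ^ k / (k ! : ℝ) ≤ (1 / 2 : ℝ) ^ k := by
    have ht := FloorSemiring.tendsto_pow_div_factorial_atTop (K := ℝ) (2 * ρ)
    filter_upwards [ht.eventually_lt_const (by norm_num : (0 : ℝ) < 1)] with k hk
    have heq : ρ ^ k / (k ! : ℝ) = ((2 * ρ) ^ k / (k ! : ℝ)) * (1 / 2) ^ k := by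
      rw [div_mul_eq_mul_div, ← mul_pow]
      have h3 : 2 * ρ * (1 / 2) = ρ := by ring
      rw [h3]
    rw [heq]
    calc ((2 * ρ) ^ k / (k ! : ℝ)) * (1 / 2) ^ k ≤ 1 * (1 / 2) ^ k := by
          refine mul_le_mul_of_nonneg_right (le_of_lt hk) (by positivity)
    _ = (1 / 2 : ℝ) ^ k := one_mul _
  refine Summable.of_norm_bounded_eventually
    (g := fun k => |C| * (((k : ℝ) + 1) ^ m * (1 / 2) ^ k)) (hA.mul_left _) ?_
  rw [Nat.cofinite_eq_atTop]
  filter_upwards [hev] with k hk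
  have hk1 : (1 : ℝ) ≤ (k : ℝ) + 1 := by
    have := Nat.cast_nonneg (α := ℝ) k; linarith
  have h1 : |g k| ≤ |C| * ((k : ℝ) + 1) ^ m := by
    calc |g k| ≤ C * ((k : ℝ) + 1) ^ r := hg k
    _ ≤ |C| * ((k : ℝ) + 1) ^ r :=
        mul_le_mul_of_nonneg_right (le_abs_self C) (Real.rpow_nonneg (by linarith) r)
    _ ≤ |C| * ((k : ℝ) + 1) ^ m := by
        refine mul_le_mul_of_nonneg_left ?_ (abs_nonneg C)
        rw [← Real.rpow_natCast ((k : ℝ) + 1) m]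
        exact Real.rpow_le_rpow_of_exponent_le hk1 (hm ▸ Nat.le_ceil r)
  rw [Real.norm_eq_abs, abs_of_nonneg (by positivity)]
  calc |g k| * ρ ^ k / k ! = |g k| * (ρ ^ k / k !) := by ring
  _ ≤ (|C| * ((k : ℝ) + 1) ^ m) * (1 / 2) ^ k :=
      mul_le_mul h1 hk (by positivity) (by positivity)
  _ = |C| * (((k : ℝ) + 1) ^ m * (1 / 2) ^ k) := by ring

private lemma summable_taylor {Q : ℂ → ℂ} (hQ : Differentiable ℂ Q) (w : ℂ) {ρ : ℝ}
    (hρ : 0 ≤ ρ) :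
    Summable (fun j : ℕ => ‖iteratedDeriv j Q w / (j ! : ℂ)‖ * ρ ^ j) := by
  set x : ℝ := 2 * ρ + 1 with hxdef
  have hx : 0 < x := by positivity
  have hs := Complex.hasSum_taylorSeries_of_entire hQ w (w + x)
  have hsum : Summable (fun j : ℕ => ‖iteratedDeriv j Q w / (j ! : ℂ)‖ * x ^ j) := by
    have h2 : Summable
        (fun j : ℕ => ‖(j ! : ℂ)⁻¹ • ((w + x) - w) ^ j • iteratedDeriv j Q w‖) :=
      summable_norm_iff.mpr hs.summable
    refine h2.congr fun j => ?_
    have : (w + (x : ℂ)) - w = (x : ℂ) := by ring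
    rw [this, norm_smul, norm_smul, norm_inv, norm_pow, Complex.norm_natCast,
      Complex.norm_real, Real.norm_eq_abs, abs_of_pos hx, norm_div, Complex.norm_natCast]
    ring
  set M := ∑' j : ℕ, ‖iteratedDeriv j Q w / (j ! : ℂ)‖ * x ^ j with hM
  have hle : ∀ j, ‖iteratedDeriv j Q w / (j ! : ℂ)‖ * x ^ j ≤ M :=
    fun j => hsum.le_tsum j (fun i _ => by positivity)
  refine Summable.of_nonneg_of_le (fun j => by positivity) (fun j => ?_)
    ((summable_geometric_of_lt_one (by norm_num) (by norm_num : (1/2 : ℝ) < 1)).mul_left M)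
  calc ‖iteratedDeriv j Q w / (j ! : ℂ)‖ * ρ ^ j
      ≤ ‖iteratedDeriv j Q w / (j ! : ℂ)‖ * (x * (1 / 2)) ^ j := by
        refine mul_le_mul_of_nonneg_left (pow_le_pow_left₀ hρ (by rw [hxdef]; linarith) j)
          (norm_nonneg _)
  _ = (‖iteratedDeriv j Q w / (j ! : ℂ)‖ * x ^ j) * (1 / 2) ^ j := by
        rw [mul_pow]; ring
  _ ≤ M * (1 / 2) ^ j := mul_le_mul_of_nonneg_right (hle j) (by positivity)

/-- Poisson-Charlier expansion: for a sequence `f` of polynomial growth with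
(entire) Poisson transform `P`, one has `f(n) = ∑_{j≥0} P^{(j)}(n)/j! · τ_j(n)`,
where `τ_j(n) = n! [z^n]((z-n)^j e^z)`, the series being convergent. -/
theorem stmt6 (f : ℕ → ℝ) (C r : ℝ) (hf : ∀ n : ℕ, |f n| ≤ C * ((n : ℝ) + 1) ^ r)
    (P : ℂ → ℂ)
    (hP : ∀ z : ℂ, P z = Complex.exp (-z) * ∑' k : ℕ, (f k : ℂ) * z ^ k / (k ! : ℂ))
    (τ : ℕ → ℕ → ℂ)
    (hτ : ∀ j n : ℕ, τ j n = iteratedDeriv n (fun z : ℂ => (z - (n : ℂ)) ^ j * Complex.exp z) 0)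
    (n : ℕ) :
    HasSum (fun j : ℕ => iteratedDeriv j P (n : ℂ) / (j ! : ℂ) * τ j n) ((f n : ℂ)) := by
  classical
  set g : ℂ → ℂ := fun z => ∑' k : ℕ, (f k : ℂ) * z ^ k / (k ! : ℂ) with hgdef
  have hgz : ∀ z : ℂ, g z = ∑' k : ℕ, (f k : ℂ) * z ^ k / (k ! : ℂ) := fun z => rfl
  -- Step B : partial sums of the power series
  have hF'diff : ∀ s : Finset ℕ,
      Differentiable ℂ (fun z : ℂ => ∑ k ∈ s, (f k : ℂ) * z ^ k / (k ! : ℂ)) := by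
    intro s
    exact Differentiable.fun_sum fun k _ =>
      ((differentiable_const _).mul (differentiable_pow k)).div_const _
  have hB : TendstoLocallyUniformlyOn
      (fun (s : Finset ℕ) (z : ℂ) => ∑ k ∈ s, (f k : ℂ) * z ^ k / (k ! : ℂ)) g atTop
      Set.univ := by
    rw [tendstoLocallyUniformlyOn_iff_forall_isCompact isOpen_univ]
    intro K _ hKc
    obtain ⟨R, hRK⟩ := hKc.isBounded.subset_closedBall 0
    have hsum := summable_aux hf (le_max_right R 0)
    refine TendstoUniformlyOn.congr_right (tendstoUniformlyOn_tsum hsum ?_)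
      (fun z _ => rfl)
    intro k z hz
    have hzR : ‖z‖ ≤ max R 0 :=
      le_trans (mem_closedBall_zero_iff.mp (hRK hz)) (le_max_left _ _)
    rw [norm_div, norm_mul, norm_pow, Complex.norm_natCast, Complex.norm_real,
      Real.norm_eq_abs]
    gcongr
  have hgdiff : Differentiable ℂ g := by
    have := hB.differentiableOn
      (Filter.Eventually.of_forall fun s => (hF'diff s).differentiableOn) isOpen_univ
    exact differentiableOn_univ.mp this
  -- value of the n-th derivative of g at 0
  have hmono : ∀ s : Finset ℕ,
      iteratedDeriv n (fun z : ℂ => ∑ k ∈ s, (f k : ℂ) * z ^ k / (k ! : ℂ)) 0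
        = if n ∈ s then (f n : ℂ) else 0 := by
    intro s
    have hrw : (fun z : ℂ => ∑ k ∈ s, (f k : ℂ) * z ^ k / (k ! : ℂ))
        = fun z : ℂ => ∑ k ∈ s, ((f k : ℂ) / (k ! : ℂ)) * z ^ k := by
      funext z
      exact Finset.sum_congr rfl fun k _ => by ring
    rw [hrw, iteratedDeriv_finset_sum (fun k => (differentiable_pow k).const_mul _) n 0]
    have hterm : ∀ k : ℕ, iteratedDeriv n (fun z : ℂ => ((f k : ℂ) / (k ! : ℂ)) * z ^ k) 0
        = if k = n then ((f k : ℂ) / (k ! : ℂ)) * (n ! : ℂ) else 0 := by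
      intro k
      rw [iteratedDeriv_cmul (differentiable_pow k) _ n 0, iteratedDeriv_monomial_zero]
      split <;> simp
    rw [Finset.sum_congr rfl fun k _ => hterm k, Finset.sum_ite_eq' s n
      (fun k => ((f k : ℂ) / (k ! : ℂ)) * (n ! : ℂ))]
    have hfac : ((n ! : ℂ)) ≠ 0 := Nat.cast_ne_zero.mpr (Nat.factorial_ne_zero n)
    split <;> simp [div_mul_cancel₀, hfac]
  have keyB := (tlu_iteratedDeriv hF'diff hB n).tendsto_at (Set.mem_univ (0 : ℂ))
  have hval : iteratedDeriv n g 0 = (f n : ℂ) := by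
    have hev : ∀ᶠ s : Finset ℕ in atTop,
        iteratedDeriv n (fun z : ℂ => ∑ k ∈ s, (f k : ℂ) * z ^ k / (k ! : ℂ)) 0
          = (f n : ℂ) := by
      filter_upwards [eventually_ge_atTop ({n} : Finset ℕ)] with s hs
      rw [hmono s, if_pos (Finset.singleton_subset_iff.mp hs)]
    have h2 := keyB.congr' hev
    exact tendsto_nhds_unique h2 tendsto_const_nhds
  -- P is entire
  have hPdiff : Differentiable ℂ P := by
    have hPeq : P = fun z => Complex.exp (-z) * g z := funext hP
    rw [hPeq]
    exact (differentiable_id.neg.cexp).mul hgdiff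
  have hgP : ∀ z : ℂ, g z = Complex.exp z * P z := by
    intro z
    rw [hP z, ← mul_assoc, ← Complex.exp_add, add_neg_cancel, Complex.exp_zero, one_mul]
  -- Taylor expansion of P at n, multiplied by exp
  have hGsum : ∀ z : ℂ, HasSum
      (fun j : ℕ => (iteratedDeriv j P (n : ℂ) / (j ! : ℂ)) * ((z - (n : ℂ)) ^ j *
        Complex.exp z)) (g z) := by
    intro z
    have h1 := (Complex.hasSum_taylorSeries_of_entire hPdiff (n : ℂ) z).mul_right
      (Complex.exp z)
    have hrw : (fun j : ℕ => (iteratedDeriv j P (n : ℂ) / (j ! : ℂ)) * ((z - (n : ℂ)) ^ j *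
        Complex.exp z))
        = fun j : ℕ => ((j ! : ℂ)⁻¹ • (z - (n : ℂ)) ^ j • iteratedDeriv j P (n : ℂ)) *
          Complex.exp z := by
      funext j
      simp only [smul_eq_mul]
      ring
    rw [hrw, hgP z, mul_comm]
    exact h1
  -- Step A : partial sums of the Taylor-type series
  have hcdiff : ∀ j : ℕ, Differentiable ℂ (fun z : ℂ => (z - (n : ℂ)) ^ j * Complex.exp z) :=
    fun j => ((differentiable_id.sub_const _).pow j).mul Complex.differentiable_exp
  have hFdiff : ∀ s : Finset ℕ, Differentiable ℂ (fun z : ℂ =>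
      ∑ j ∈ s, (iteratedDeriv j P (n : ℂ) / (j ! : ℂ)) * ((z - (n : ℂ)) ^ j * Complex.exp z)) :=
    fun s => Differentiable.fun_sum fun j _ => (hcdiff j).const_mul _
  have hA : TendstoLocallyUniformlyOn (fun (s : Finset ℕ) (z : ℂ) =>
      ∑ j ∈ s, (iteratedDeriv j P (n : ℂ) / (j ! : ℂ)) * ((z - (n : ℂ)) ^ j * Complex.exp z))
      g atTop Set.univ := by
    rw [tendstoLocallyUniformlyOn_iff_forall_isCompact isOpen_univ]
    intro K _ hKc
    obtain ⟨R, hRK⟩ := hKc.isBounded.subset_closedBall 0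
    have hsum : Summable (fun j : ℕ =>
        ‖iteratedDeriv j P (n : ℂ) / (j ! : ℂ)‖ * (max R 0 + n) ^ j * Real.exp (max R 0)) := by
      have h1 := (summable_taylor hPdiff (n : ℂ) (ρ := max R 0 + n)
        (by positivity)).mul_right (Real.exp (max R 0))
      exact h1.congr fun j => by ring
    refine TendstoUniformlyOn.congr_right (tendstoUniformlyOn_tsum hsum ?_)
      (fun z _ => (hGsum z).tsum_eq)
    intro j z hz
    have hzR : ‖z‖ ≤ max R 0 :=
      le_trans (mem_closedBall_zero_iff.mp (hRK hz)) (le_max_left _ _)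
    have h1 : ‖z - (n : ℂ)‖ ≤ max R 0 + n := by
      calc ‖z - (n : ℂ)‖ ≤ ‖z‖ + ‖(n : ℂ)‖ := norm_sub_le _ _
      _ ≤ max R 0 + n := by rw [Complex.norm_natCast]; linarith
    have h2 : ‖Complex.exp z‖ ≤ Real.exp (max R 0) := by
      rw [Complex.norm_exp]
      exact Real.exp_le_exp.mpr (le_trans (Complex.re_le_norm z) hzR)
    calc ‖(iteratedDeriv j P (n : ℂ) / (j ! : ℂ)) * ((z - (n : ℂ)) ^ j * Complex.exp z)‖
        = ‖iteratedDeriv j P (n : ℂ) / (j ! : ℂ)‖ * (‖z - (n : ℂ)‖ ^ j * ‖Complex.exp z‖) := by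
          rw [norm_mul, norm_mul, norm_pow]
    _ ≤ ‖iteratedDeriv j P (n : ℂ) / (j ! : ℂ)‖ * ((max R 0 + n) ^ j * Real.exp (max R 0)) := by
          gcongr
    _ = ‖iteratedDeriv j P (n : ℂ) / (j ! : ℂ)‖ * (max R 0 + n) ^ j * Real.exp (max R 0) := by
          ring
  have keyA := (tlu_iteratedDeriv hFdiff hA n).tendsto_at (Set.mem_univ (0 : ℂ))
  have hAs : ∀ s : Finset ℕ, iteratedDeriv n (fun z : ℂ =>
      ∑ j ∈ s, (iteratedDeriv j P (n : ℂ) / (j ! : ℂ)) * ((z - (n : ℂ)) ^ j * Complex.exp z)) 0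
        = ∑ j ∈ s, iteratedDeriv j P (n : ℂ) / (j ! : ℂ) * τ j n := by
    intro s
    rw [iteratedDeriv_finset_sum (fun j => (hcdiff j).const_mul _) n 0]
    refine Finset.sum_congr rfl fun j _ => ?_
    rw [iteratedDeriv_cmul (hcdiff j) _ n 0, hτ j n]
  show Filter.Tendsto
    (fun s : Finset ℕ => ∑ j ∈ s, iteratedDeriv j P (n : ℂ) / (j ! : ℂ) * τ j n) atTop
    (𝓝 ((f n : ℂ)))
  rw [← hval]
  exact Filter.Tendsto.congr hAs keyA
end

section
/- Let f : ℕ → ℝ satisfy f(k) = O(k^c) for some c < -1 with f(0) ≠ 0 allowed. Then the Newton series ψ(s) = ∑_{k≥0} (-1)^k (f(k)/k!) s(s-1)⋯(s-k+1) converges for all s with Re s > c, and ψ(n) = ∑_{k=0}^n (-1)^k C(n,k) f(k) for every natural number n; thus ψ is an analytic lifting of the binomial transform Π[f]. -/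
open scoped Nat

private lemma prod_sub_eq_descFactorial (n : ℕ) : ∀ k : ℕ, k ≤ n →
    (∏ i ∈ Finset.range k, ((n : ℂ) - (i : ℂ))) = (n.descFactorial k : ℂ)
  | 0, _ => by simp
  | (k+1), h => by
    rw [Finset.prod_range_succ, prod_sub_eq_descFactorial n k (Nat.le_of_succ_le h),
      Nat.descFactorial_succ, Nat.cast_mul, Nat.cast_sub (Nat.lt_of_succ_le h).le]
    ring

set_option maxHeartbeats 1000000 in
/-- Nörlund-Rice: for a sequence `f` with `f(k) = O(k^c)`, `c < -1`, the Newton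
interpolation series `ψ(s) = ∑_k (-1)^k (f(k)/k!) s(s-1)⋯(s-k+1)` converges for
`Re s > c`, and at natural numbers `ψ(n) = ∑_{k=0}^n (-1)^k C(n,k) f(k) = Π[f](n)`. -/
theorem stmt7 (f : ℕ → ℝ) (c K : ℝ) (hc : c < -1)
    (hf : ∀ k : ℕ, |f k| ≤ K * ((k : ℝ) + 1) ^ c) :
    (∀ s : ℂ, c < s.re →
      Summable (fun k : ℕ =>
        (-1 : ℂ) ^ k * ((f k : ℂ) / (k ! : ℂ)) * ∏ i ∈ Finset.range k, (s - (i : ℂ)))) ∧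
    (∀ n : ℕ,
      (∑' k : ℕ, (-1 : ℂ) ^ k * ((f k : ℂ) / (k ! : ℂ)) *
          ∏ i ∈ Finset.range k, ((n : ℂ) - (i : ℂ))) =
        ∑ k ∈ Finset.range (n + 1), (-1 : ℂ) ^ k * (n.choose k) * (f k : ℂ)) := by
  constructor
  · intro s hs
    have hK0 : 0 ≤ K := by
      have h0 := hf 0
      simp only [Nat.cast_zero, zero_add, Real.one_rpow, mul_one] at h0
      exact (abs_nonneg _).trans h0
    set σ' : ℝ := (c + s.re) / 2 with hσ'def
    have h1 : c < σ' := by rw [hσ'def]; linarith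
    have h2 : σ' < s.re := by rw [hσ'def]; linarith
    obtain ⟨N, hN⟩ := exists_nat_ge (max (max s.re 1) (s.im ^ 2 / (s.re - σ') + s.re + σ'))
    have hN1 : (1 : ℝ) ≤ N := le_trans ((le_max_right _ _).trans (le_max_left _ _)) hN
    have hNre : s.re ≤ N := le_trans ((le_max_left _ _).trans (le_max_left _ _)) hN
    have hNim : s.im ^ 2 / (s.re - σ') + s.re + σ' ≤ N := le_trans (le_max_right _ _) hN
    have hpos : (0 : ℝ) < s.re - σ' := by linarith
    -- key pointwise bound
    have hkey : ∀ i : ℕ, N ≤ i → ‖s - (i : ℂ)‖ ≤ (i : ℝ) - σ' := by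
      intro i hi
      have hi' : (N : ℝ) ≤ i := Nat.cast_le.mpr hi
      have hi0 : (0 : ℝ) ≤ i := Nat.cast_nonneg i
      have him : s.im ^ 2 ≤ (s.re - σ') * (2 * i - s.re - σ') := by
        have hq : s.im ^ 2 / (s.re - σ') ≤ (i : ℝ) - s.re - σ' := by linarith
        have := (div_le_iff₀ hpos).mp hq
        nlinarith [sq_nonneg s.im]
      have hsq : ‖s - (i : ℂ)‖ ^ 2 ≤ ((i : ℝ) - σ') ^ 2 := by
        have he : ‖s - (i : ℂ)‖ ^ 2 = (s.re - i) ^ 2 + s.im ^ 2 := by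
          rw [Complex.sq_norm, Complex.normSq_apply]
          simp [Complex.sub_re, Complex.sub_im]
          ring
        rw [he]
        nlinarith [hNre, hi']
      have := Real.sqrt_le_sqrt hsq
      rwa [Real.sqrt_sq (norm_nonneg _), Real.sqrt_sq (by linarith : (0:ℝ) ≤ (i:ℝ) - σ')]
        at this
    set C₀ : ℝ := ∏ i ∈ Finset.range N, (‖s - (i : ℂ)‖ / ((i : ℝ) + 1)) with hC₀def
    have hC₀ : 0 ≤ C₀ :=
      Finset.prod_nonneg fun i _ => div_nonneg (norm_nonneg _) (by positivity)
    set A : ℝ := Real.log ((N : ℝ) + 1) with hAdef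
    have hA0 : 0 ≤ A := Real.log_nonneg (by linarith)
    set E : ℝ := Real.exp (|σ' + 1| * A) with hEdef
    have hE0 : 0 < E := Real.exp_pos _
    -- the dominating summable series
    have hp : c - (σ' + 1) < -1 := by linarith
    have hg : Summable (fun k : ℕ => (K * C₀ * E) * (((k : ℝ) + 1) ^ (c - (σ' + 1)))) := by
      apply Summable.mul_left
      have hsum := (summable_nat_add_iff 1).mpr (Real.summable_nat_rpow.mpr hp)
      simpa using hsum
    apply hg.of_norm_bounded_eventually_nat
    filter_upwards [Filter.eventually_ge_atTop N] with k hk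
    -- compute the norm
    have hfacR : (∏ i ∈ Finset.range k, ((i : ℝ) + 1)) = (k ! : ℝ) := by
      rw [← Finset.prod_range_add_one_eq_factorial]
      push_cast
      rfl
    have hnorm : ‖(-1 : ℂ) ^ k * ((f k : ℂ) / (k ! : ℂ)) * ∏ i ∈ Finset.range k, (s - (i : ℂ))‖
        = |f k| * ∏ i ∈ Finset.range k, (‖s - (i : ℂ)‖ / ((i : ℝ) + 1)) := by
      rw [norm_mul, norm_mul, norm_pow, norm_neg, norm_one, one_pow, one_mul, norm_div,
        Complex.norm_real, Complex.norm_natCast, norm_prod, Finset.prod_div_distrib, hfacR,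
        Real.norm_eq_abs]
      ring
    rw [hnorm]
    -- split the product
    have hsplit : (∏ i ∈ Finset.range k, (‖s - (i : ℂ)‖ / ((i : ℝ) + 1)))
        = C₀ * ∏ i ∈ Finset.Ico N k, (‖s - (i : ℂ)‖ / ((i : ℝ) + 1)) := by
      rw [hC₀def, Finset.prod_range_mul_prod_Ico _ hk]
    -- bound the Ico product
    set S : ℝ := ∑ i ∈ Finset.Ico N k, (1 / ((i : ℝ) + 1)) with hSdef
    have hIco : (∏ i ∈ Finset.Ico N k, (‖s - (i : ℂ)‖ / ((i : ℝ) + 1)))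
        ≤ Real.exp (-(σ' + 1) * S) := by
      have step1 : (∏ i ∈ Finset.Ico N k, (‖s - (i : ℂ)‖ / ((i : ℝ) + 1)))
          ≤ ∏ i ∈ Finset.Ico N k, Real.exp (-(σ' + 1) * (1 / ((i : ℝ) + 1))) := by
        apply Finset.prod_le_prod
        · intro i _; exact div_nonneg (norm_nonneg _) (by positivity)
        · intro i hi
          have hiN : N ≤ i := (Finset.mem_Ico.mp hi).1
          have hi' : (N : ℝ) ≤ i := Nat.cast_le.mpr hiN
          have hd : ‖s - (i : ℂ)‖ / ((i : ℝ) + 1) ≤ ((i : ℝ) - σ') / ((i : ℝ) + 1) :=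
            div_le_div_of_nonneg_right (hkey i hiN) (by positivity)
          refine hd.trans ?_
          have he : ((i : ℝ) - σ') / ((i : ℝ) + 1) = -(σ' + 1) * (1 / ((i : ℝ) + 1)) + 1 := by
            field_simp
            ring
          rw [he]
          exact Real.add_one_le_exp _
      rw [← Real.exp_sum, Finset.mul_sum] at *
      exact step1
    -- bounds on S via telescoping logs
    have hS_lb : Real.log ((k : ℝ) + 1) - A ≤ S := by
      have htel : ∑ i ∈ Finset.Ico N k,
          (Real.log ((i : ℝ) + 1 + 1) - Real.log ((i : ℝ) + 1))
          = Real.log ((k : ℝ) + 1) - Real.log ((N : ℝ) + 1) := by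
        have h3 : ∀ m : ℕ, ∑ i ∈ Finset.range m,
            (Real.log ((i : ℝ) + 1 + 1) - Real.log ((i : ℝ) + 1))
            = Real.log ((m : ℝ) + 1) := by
          intro m
          have := Finset.sum_range_sub (fun i : ℕ => Real.log ((i : ℝ) + 1)) m
          simpa using this
        rw [Finset.sum_Ico_eq_sub _ hk, h3, h3]
      rw [hAdef, ← htel, hSdef]
      apply Finset.sum_le_sum
      intro i _
      have hx : (0 : ℝ) < ((i : ℝ) + 1 + 1) / ((i : ℝ) + 1) := by positivity
      have := Real.log_le_sub_one_of_pos hx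
      rw [Real.log_div (by positivity) (by positivity)] at this
      have he : ((i : ℝ) + 1 + 1) / ((i : ℝ) + 1) - 1 = 1 / ((i : ℝ) + 1) := by field_simp; ring
      linarith [he ▸ this]
    have hS_ub : S ≤ Real.log ((k : ℝ) + 1) + A := by
      have htel : ∑ i ∈ Finset.Ico N k,
          (Real.log ((i : ℝ) + 1) - Real.log (i : ℝ))
          = Real.log (k : ℝ) - Real.log (N : ℝ) := by
        have h3 : ∀ m : ℕ, ∑ i ∈ Finset.range m,
            (Real.log ((i : ℝ) + 1) - Real.log (i : ℝ)) = Real.log (m : ℝ) := by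
          intro m
          have := Finset.sum_range_sub (fun i : ℕ => Real.log (i : ℝ)) m
          simpa using this
        rw [Finset.sum_Ico_eq_sub _ hk, h3, h3]
      have hstep : S ≤ Real.log (k : ℝ) - Real.log (N : ℝ) := by
        rw [← htel, hSdef]
        apply Finset.sum_le_sum
        intro i hi
        have hiN : N ≤ i := (Finset.mem_Ico.mp hi).1
        have hi1 : (1 : ℝ) ≤ i := hN1.trans (Nat.cast_le.mpr hiN)
        have hx : (0 : ℝ) < (i : ℝ) / ((i : ℝ) + 1) := div_pos (by linarith) (by positivity)
        have := Real.log_le_sub_one_of_pos hx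
        rw [Real.log_div (by positivity) (by positivity)] at this
        have he : (i : ℝ) / ((i : ℝ) + 1) - 1 = -(1 / ((i : ℝ) + 1)) := by field_simp; ring
        linarith [he ▸ this]
      have hlogN : 0 ≤ Real.log (N : ℝ) := Real.log_nonneg hN1
      have hk1 : (1 : ℝ) ≤ k := hN1.trans (Nat.cast_le.mpr hk)
      have hlogk : Real.log (k : ℝ) ≤ Real.log ((k : ℝ) + 1) :=
        Real.log_le_log (by linarith) (by linarith)
      linarith
    -- turn the exponential bound into an rpow bound
    have hexp : Real.exp (-(σ' + 1) * S)
        ≤ E * ((k : ℝ) + 1) ^ (-(σ' + 1)) := by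
      have hk0 : (0 : ℝ) < (k : ℝ) + 1 := by positivity
      rw [Real.rpow_def_of_pos hk0, hEdef, ← Real.exp_add]
      apply Real.exp_le_exp.mpr
      set L := Real.log ((k : ℝ) + 1)
      have habs : |S - L| ≤ A := abs_le.mpr ⟨by linarith, by linarith⟩
      have h4 : -(σ' + 1) * (S - L) ≤ |σ' + 1| * A := by
        calc -(σ' + 1) * (S - L) ≤ |(-(σ' + 1)) * (S - L)| := le_abs_self _
          _ = |σ' + 1| * |S - L| := by rw [abs_mul, abs_neg]
          _ ≤ |σ' + 1| * A := mul_le_mul_of_nonneg_left habs (abs_nonneg _)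
      nlinarith [h4]
    -- assemble
    have hQ : (∏ i ∈ Finset.range k, (‖s - (i : ℂ)‖ / ((i : ℝ) + 1)))
        ≤ C₀ * (E * ((k : ℝ) + 1) ^ (-(σ' + 1))) := by
      rw [hsplit]
      exact mul_le_mul_of_nonneg_left (hIco.trans hexp) hC₀
    have hk0 : (0 : ℝ) < (k : ℝ) + 1 := by positivity
    have hrw : K * C₀ * E * (((k : ℝ) + 1) ^ (c - (σ' + 1)))
        = (K * ((k : ℝ) + 1) ^ c) * (C₀ * (E * ((k : ℝ) + 1) ^ (-(σ' + 1)))) := by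
      rw [show c - (σ' + 1) = c + (-(σ' + 1)) by ring, Real.rpow_add hk0]
      ring
    rw [hrw]
    exact mul_le_mul (hf k) hQ
      (Finset.prod_nonneg fun i _ => div_nonneg (norm_nonneg _) (by positivity))
      (mul_nonneg hK0 (Real.rpow_nonneg hk0.le _))
  · intro n
    rw [tsum_eq_sum (s := Finset.range (n + 1)) ?_]
    · refine Finset.sum_congr rfl fun k hk => ?_
      have hk' : k ≤ n := Nat.lt_succ_iff.mp (Finset.mem_range.mp hk)
      rw [prod_sub_eq_descFactorial n k hk', Nat.descFactorial_eq_factorial_mul_choose,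
        Nat.cast_mul]
      have hfac : ((k ! : ℂ)) ≠ 0 := Nat.cast_ne_zero.mpr k.factorial_ne_zero
      field_simp
    · intro k hk
      have hn : n ∈ Finset.range k := by
        simp only [Finset.mem_range, not_lt] at hk ⊢
        omega
      rw [Finset.prod_eq_zero hn (by simp), mul_zero]
end
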